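/- The norm of the unique invariant fluid model solution satisfies ‖z*‖_1 = λ E[min{‖z*‖_1 (B_1 + ... + B_I), D}], where B_l ~ Exp(μ_l) and D ~ Exp(ν) are mutually independent. -/

import Mathlib

open MeasureTheory ProbabilityTheory Set

namespace InvariantNormAux

open Real

lemma expMeasure_withDensity (r : ℝ) :
    expMeasure r = volume.withDensity (exponentialPDF r) := rfl

lemma lap_lintegral {r c : ℝ} (hr : 0 < r) (hc : 0 ≤ c) :
    ∫⁻ x, ENNReal.ofReal (Real.exp (-(c * x))) ∂(expMeasure r)
      = ENNReal.ofReal (r / (r + c)) := by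
  have hrc : 0 < r + c := by linarith
  have hm : ∀ q : ℝ, Measurable (exponentialPDF q) :=
    fun q => (measurable_exponentialPDFReal q).ennreal_ofReal
  rw [expMeasure_withDensity,
    lintegral_withDensity_eq_lintegral_mul _ (hm r) (by fun_prop)]
  have hpt : ∀ x, (exponentialPDF r * fun x => ENNReal.ofReal (Real.exp (-(c * x)))) x
      = ENNReal.ofReal (r / (r + c)) * exponentialPDF (r + c) x := by
    intro x
    rcases le_or_gt 0 x with hx | hx
    · rw [Pi.mul_apply, exponentialPDF_of_nonneg hx, exponentialPDF_of_nonneg hx,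
        ← ENNReal.ofReal_mul (by positivity), ← ENNReal.ofReal_mul (by positivity)]
      congr 1
      have h1 : r / (r + c) * ((r + c) * rexp (-((r + c) * x))) = r * rexp (-((r + c) * x)) := by
        field_simp
      rw [h1, mul_assoc, ← Real.exp_add]
      ring_nf
    · rw [Pi.mul_apply, exponentialPDF_of_neg hx, exponentialPDF_of_neg hx, zero_mul, mul_zero]
  simp_rw [hpt]
  rw [lintegral_const_mul _ (hm (r+c)), lintegral_exponentialPDF_eq_one hrc, mul_one]

lemma min_exp_lintegral {r c : ℝ} (hr : 0 < r) (hc : 0 ≤ c) :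
    ∫⁻ y, ENNReal.ofReal (min c y) ∂(expMeasure r)
      = ENNReal.ofReal ((1 - Real.exp (-(r * c))) / r) := by
  have hm : ∀ q : ℝ, Measurable (exponentialPDF q) :=
    fun q => (measurable_exponentialPDFReal q).ennreal_ofReal
  rw [expMeasure_withDensity,
    lintegral_withDensity_eq_lintegral_mul _ (hm r) (by fun_prop)]
  set f : ℝ → ℝ := fun y => min c y * (r * Real.exp (-(r * y))) with hf
  have hpt : ∀ y, (exponentialPDF r * fun y => ENNReal.ofReal (min c y)) y
      = ENNReal.ofReal (Set.indicator (Ici 0) f y) := by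
    intro y
    rcases le_or_gt 0 y with hy | hy
    · rw [Pi.mul_apply, exponentialPDF_of_nonneg hy, Set.indicator_of_mem (mem_Ici.mpr hy) f,
        ← ENNReal.ofReal_mul (by positivity)]
      congr 1
      simp only [hf]; ring
    · rw [Pi.mul_apply, exponentialPDF_of_neg hy, zero_mul,
        Set.indicator_of_notMem (by simpa using hy), ENNReal.ofReal_zero]
  simp_rw [hpt]
  have hbint : ∀ a : ℝ, IntegrableOn (fun y => c * (r * Real.exp (-(r * y)))) (Ioi a) := by
    intro a
    have h : IntegrableOn (fun x => c * r * rexp (-r * x)) (Ioi a) :=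
      (exp_neg_integrableOn_Ioi a hr).const_mul (c * r)
    refine h.congr_fun (fun y _ => by beta_reduce; rw [neg_mul]; ring) measurableSet_Ioi
  have hfmeas : Measurable f := by fun_prop
  have hfint1 : IntegrableOn f (Ioi 0) := by
    refine Integrable.mono' (hbint 0) hfmeas.aestronglyMeasurable.restrict ?_
    rw [ae_restrict_iff' measurableSet_Ioi]
    refine ae_of_all _ fun y hy => ?_
    have h0y : (0:ℝ) < y := hy
    have h2 : min c y ≤ c := min_le_left _ _
    have h3 : 0 < r * Real.exp (-(r * y)) := by positivity
    rw [Real.norm_eq_abs, abs_of_nonneg (by positivity)]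
    exact mul_le_mul_of_nonneg_right h2 h3.le
  have hfint : Integrable (Set.indicator (Ici 0) f) := by
    rw [integrable_indicator_iff measurableSet_Ici, integrableOn_Ici_iff_integrableOn_Ioi]
    exact hfint1
  rw [← ofReal_integral_eq_lintegral_ofReal hfint
      (ae_of_all _ fun y => Set.indicator_nonneg
        (fun y hy => mul_nonneg (le_min hc hy) (by positivity)) y)]
  congr 1
  rw [integral_indicator measurableSet_Ici, integral_Ici_eq_integral_Ioi]
  have hsplit : Ioc 0 c ∪ Ioi c = Ioi 0 := Ioc_union_Ioi_eq_Ioi hc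
  rw [← hsplit, setIntegral_union (Ioc_disjoint_Ioi le_rfl) measurableSet_Ioi
    (hfint1.mono_set (by rw [← hsplit]; exact subset_union_left))
    (hfint1.mono_set (by rw [← hsplit]; exact subset_union_right))]
  have hIoc : ∫ y in Ioc 0 c, f y = ∫ y in (0:ℝ)..c, y * (r * Real.exp (-(r * y))) := by
    rw [intervalIntegral.integral_of_le hc]
    refine setIntegral_congr_fun measurableSet_Ioc fun y hy => ?_
    simp only [hf]
    rw [min_eq_right hy.2]
  have hderiv : ∀ y : ℝ, HasDerivAt (fun y => -(y * Real.exp (-(r * y))) - Real.exp (-(r * y)) / r)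
      (y * (r * Real.exp (-(r * y)))) y := by
    intro y
    have h3 : HasDerivAt (fun y => Real.exp (-(r * y))) (Real.exp (-(r * y)) * (-r)) y := by
      simpa using (((hasDerivAt_id y).const_mul r).neg).exp
    have hy : HasDerivAt (fun y => y * Real.exp (-(r * y)))
        (1 * Real.exp (-(r * y)) + y * (Real.exp (-(r * y)) * (-r))) y :=
      (hasDerivAt_id y).mul h3
    refine ((hy.neg).sub (h3.div_const r)).congr_deriv ?_
    field_simp
    ring
  have hIoc2 : ∫ y in (0:ℝ)..c, y * (r * Real.exp (-(r * y)))
      = (-(c * Real.exp (-(r * c))) - Real.exp (-(r * c)) / r)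
        - (-(0 * Real.exp (-(r * 0))) - Real.exp (-(r * 0)) / r) := by
    refine intervalIntegral.integral_eq_sub_of_hasDerivAt (fun y _ => hderiv y) ?_
    exact (by fun_prop : Continuous fun y => y * (r * Real.exp (-(r * y)))).intervalIntegrable 0 c
  have hIoi : ∫ y in Ioi c, f y = c * Real.exp (-(r * c)) := by
    have h1 : ∫ y in Ioi c, f y = ∫ y in Ioi c, (c * r) * Real.exp (-(r * y)) := by
      refine setIntegral_congr_fun measurableSet_Ioi fun y hy => ?_
      simp only [hf]
      rw [min_eq_left (le_of_lt hy)]; ring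
    have h2 : ∫ y in Ioi c, Real.exp (-(r * y)) = r⁻¹ * Real.exp (-(r * c)) := by
      have := integral_comp_mul_left_Ioi (fun x => Real.exp (-x)) c hr
      simp only [smul_eq_mul] at this
      rw [this, integral_exp_neg_Ioi]
    rw [h1, integral_const_mul, h2]
    field_simp
  rw [hIoc, hIoc2, hIoi]
  simp only [mul_zero, neg_zero, zero_mul, Real.exp_zero]
  field_simp
  ring

open Fin.NatCast in
lemma alg_key {n : ℕ} {lam ν S : ℝ} (μ z : Fin (n+1) → ℝ) (hμ : ∀ i, 0 < μ i) (hν : 0 < ν)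
    (hS : 0 < S) (hSdef : S = ∑ j, z j)
    (heq0 : lam - μ 0 * z 0 / S - ν * z 0 = 0)
    (heqi : ∀ i : Fin (n+1), i ≠ 0 →
      μ (i - 1) * z (i - 1) / S - μ i * z i / S - ν * z i = 0) :
    ν * S = lam * (1 - ∏ i, μ i / (μ i + ν * S)) := by
  have hS' : S ≠ 0 := ne_of_gt hS
  have hd : ∀ i : Fin (n+1), 0 < μ i + ν * S := fun i => by
    have := hμ i; positivity
  have main : ∀ k : ℕ, k ≤ n →
      μ (k : Fin (n+1)) * z (k : Fin (n+1)) / S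
        = lam * ∏ l ∈ Finset.range (k+1), μ (l : Fin (n+1)) / (μ (l : Fin (n+1)) + ν * S)
      ∧ lam - μ (k : Fin (n+1)) * z (k : Fin (n+1)) / S
        = ν * ∑ j ∈ Finset.range (k+1), z (j : Fin (n+1)) := by
    intro k
    induction k with
    | zero =>
      intro _
      simp only [Nat.cast_zero, zero_add, Finset.range_one, Finset.prod_singleton,
        Finset.sum_singleton]
      constructor
      · have h0 := hμ 0
        have hd0 := hd 0
        have hd0' : μ 0 + ν * S ≠ 0 := ne_of_gt hd0
        field_simp
        field_simp at heq0
        linear_combination -heq0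
      · linarith [heq0]
    | succ k ih =>
      intro hk
      obtain ⟨ih1, ih2⟩ := ih (by omega)
      have hval : (((k+1 : ℕ)) : Fin (n+1)).val = k+1 := Fin.val_cast_of_lt (by omega)
      have hne : ((k+1 : ℕ) : Fin (n+1)) ≠ 0 := by
        intro h
        have := congrArg Fin.val h
        rw [hval] at this
        simp at this
      have hsub : ((k+1 : ℕ) : Fin (n+1)) - 1 = (k : Fin (n+1)) := by
        have h1 : ((k+1 : ℕ) : Fin (n+1)) = (k : Fin (n+1)) + 1 := by push_cast; ring
        rw [h1, add_sub_cancel_right]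
      have he := heqi _ hne
      rw [hsub] at he
      set i1 : Fin (n+1) := ((k+1 : ℕ) : Fin (n+1)) with hi1
      set jk : Fin (n+1) := (k : Fin (n+1)) with hjk
      have h0 := hμ i1
      have hd0 := hd i1
      have hd0' : μ i1 + ν * S ≠ 0 := ne_of_gt hd0
      constructor
      · have hgoal : μ i1 * z i1 / S
            = (μ jk * z jk / S) * (μ i1 / (μ i1 + ν * S)) := by
          field_simp
          field_simp at he
          first
          | linear_combination (-(μ i1)) * he
          | linear_combination (μ i1) * he
          | linear_combination (-(μ i1) * S) * he
          | linear_combination (μ i1 * S) * he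
          | linear_combination -he
        rw [Finset.prod_range_succ, hgoal, ih1]
        ring
      · rw [Finset.sum_range_succ]
        have hstep : μ i1 * z i1 / S = μ jk * z jk / S - ν * z i1 := by
          linarith [he]
        rw [hstep]
        linarith [ih2]
  obtain ⟨h1n, h2n⟩ := main n le_rfl
  have hsum : ∑ j ∈ Finset.range (n+1), z (j : Fin (n+1)) = S := by
    rw [hSdef, ← Fin.sum_univ_eq_sum_range (fun k => z (k : Fin (n+1))) (n+1)]
    simp [Fin.cast_val_eq_self]
  have hprod : ∏ l ∈ Finset.range (n+1), μ (l : Fin (n+1)) / (μ (l : Fin (n+1)) + ν * S)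
      = ∏ i, μ i / (μ i + ν * S) := by
    rw [← Fin.prod_univ_eq_prod_range
      (fun k => μ (k : Fin (n+1)) / (μ (k : Fin (n+1)) + ν * S)) (n+1)]
    simp [Fin.cast_val_eq_self]
  rw [hsum] at h2n
  rw [hprod] at h1n
  rw [h1n] at h2n
  linarith [h2n]

variable {Ω : Type*} [MeasurableSpace Ω] {P : Measure Ω} [IsProbabilityMeasure P]

lemma ae_nonneg_of_expMeasure {X : Ω → ℝ} {r : ℝ} (hm : Measurable X)
    (h : P.map X = expMeasure r) : ∀ᵐ ω ∂P, 0 ≤ X ω := by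
  have h0 : expMeasure r (Iio 0) = 0 := by
    rw [expMeasure_withDensity, withDensity_apply _ measurableSet_Iio]
    exact lintegral_exponentialPDF_of_nonpos le_rfl
  have h1 : P (X ⁻¹' Iio 0) = 0 := by
    rw [← Measure.map_apply hm measurableSet_Iio, h, h0]
  rw [ae_iff]
  convert h1 using 2
  ext ω
  simp [not_le]

lemma exp_comp_integral {X : Ω → ℝ} {r c : ℝ} (hm : Measurable X)
    (hX : P.map X = expMeasure r) (hr : 0 < r) (hc : 0 ≤ c) :
    ∫ ω, Real.exp (-(c * X ω)) ∂P = r / (r + c) := by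
  have hmeas : Measurable fun x : ℝ => Real.exp (-(c * x)) := by fun_prop
  rw [← integral_map hm.aemeasurable hmeas.aestronglyMeasurable, hX,
    integral_eq_lintegral_of_nonneg_ae (ae_of_all _ fun x => Real.exp_nonneg _)
      hmeas.aestronglyMeasurable,
    lap_lintegral hr hc, ENNReal.toReal_ofReal (by positivity)]

end InvariantNormAux

open InvariantNormAux Real

/-- the norm of the invariant fluid model solution satisfies
`‖z*‖₁ = λ E[min(‖z*‖₁ (B_1 + ... + B_I), D)]` with `B_l ~ Exp(μ_l)`, `D ~ Exp(ν)`
mutually independent. -/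
theorem invariant_norm_fixed_point
    {Ω : Type*} [MeasurableSpace Ω] (P : Measure Ω) [IsProbabilityMeasure P]
    (n : ℕ) (lam ν : ℝ) (hlam : 0 < lam) (hν : 0 < ν)
    (μ : Fin (n + 1) → ℝ) (hμ : ∀ i, 0 < μ i)
    (hover : 1 < lam * ∑ i, 1 / μ i)
    (B : Fin (n + 1) → Ω → ℝ) (D : Ω → ℝ)
    (hmB : ∀ l, Measurable (B l)) (hmD : Measurable D)
    (hindep : iIndepFun
      (Fin.cons D B : Fin (n + 2) → Ω → ℝ) P)
    (hB : ∀ l, Measure.map (B l) P = expMeasure (μ l))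
    (hD : Measure.map D P = expMeasure ν)
    (z : Fin (n + 1) → ℝ) (hz : ∀ i, 0 < z i)
    (heq0 : lam - μ 0 * z 0 / (∑ j, z j) - ν * z 0 = 0)
    (heqi : ∀ i : Fin (n + 1), i ≠ 0 →
      μ (i - 1) * z (i - 1) / (∑ j, z j) - μ i * z i / (∑ j, z j) - ν * z i = 0) :
    (∑ j, z j) = lam * ∫ ω, min ((∑ j, z j) * ∑ l, B l ω) (D ω) ∂P := by
  classical
  set S : ℝ := ∑ j, z j with hSdef
  have hS : 0 < S := Finset.sum_pos (fun i _ => hz i) Finset.univ_nonempty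
  set c : ℝ := ν * S with hc
  have hc0 : 0 < c := by positivity
  set T : Ω → ℝ := fun ω => ∑ l, B l ω with hT
  have hmT : Measurable T := Finset.measurable_sum _ fun i _ => hmB i
  -- a.e. nonnegativity
  have hB0 : ∀ᵐ ω ∂P, ∀ l, 0 ≤ B l ω := by
    rw [ae_all_iff]
    exact fun l => ae_nonneg_of_expMeasure (hmB l) (hB l)
  have hT0 : ∀ᵐ ω ∂P, 0 ≤ T ω :=
    hB0.mono fun ω h => Finset.sum_nonneg fun l _ => h l
  have hD0 : ∀ᵐ ω ∂P, 0 ≤ D ω := ae_nonneg_of_expMeasure hmD hD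
  -- independence of T and D
  set g : Fin (n + 2) → Ω → ℝ := Fin.cons D B with hg
  have hmg : ∀ i, Measurable (g i) := by
    intro i
    refine Fin.cases ?_ ?_ i
    · simpa [hg] using hmD
    · intro l; simpa [hg] using hmB l
  set s' : Finset (Fin (n + 2)) := Finset.univ.image Fin.succ with hs'
  have h0notin : (0 : Fin (n + 2)) ∉ s' := by
    simp only [hs', Finset.mem_image]
    rintro ⟨l, -, hl⟩
    exact Fin.succ_ne_zero l hl
  have hinj : ∀ a ∈ (Finset.univ : Finset (Fin (n+1))), ∀ b ∈ Finset.univ,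
      Fin.succ a = Fin.succ b → a = b :=
    fun a _ b _ h => Fin.succ_injective _ h
  have hTsum : (∑ i ∈ s', g i) = T := by
    ext ω
    rw [Finset.sum_apply, hs', Finset.sum_image hinj]
    simp [hg, hT, Fin.cons_succ]
  have hTD : IndepFun T D P := by
    have h := hindep.indepFun_finsetSum_of_notMem hmg h0notin
    rw [hTsum] at h
    simpa [hg, Fin.cons_zero] using h
  -- instances
  haveI : IsProbabilityMeasure (P.map T) := Measure.isProbabilityMeasure_map hmT.aemeasurable
  haveI : IsProbabilityMeasure (expMeasure ν) := isProbabilityMeasure_expMeasure hν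
  -- the product measure identity
  have hmap : P.map (fun ω => (T ω, D ω)) = (P.map T).prod (expMeasure ν) := by
    rw [← hD]
    exact (indepFun_iff_map_prod_eq_prod_map_map hmT.aemeasurable hmD.aemeasurable).1 hTD
  -- the minimum function
  have hmMin : Measurable fun p : ℝ × ℝ => min (S * p.1) p.2 :=
    (measurable_fst.const_mul S).min measurable_snd
  -- step 1 : Bochner to lintegral
  have hnn : ∀ᵐ ω ∂P, 0 ≤ min (S * T ω) (D ω) := by
    filter_upwards [hT0, hD0] with ω h1 h2
    exact le_min (by positivity) h2
  have step1 : ∫ ω, min (S * T ω) (D ω) ∂P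
      = (∫⁻ ω, ENNReal.ofReal (min (S * T ω) (D ω)) ∂P).toReal := by
    exact integral_eq_lintegral_of_nonneg_ae hnn
      ((hmMin.comp (hmT.prodMk hmD)).aestronglyMeasurable)
  -- step 2 : lintegral over the product measure
  have step2 : ∫⁻ ω, ENNReal.ofReal (min (S * T ω) (D ω)) ∂P
      = ∫⁻ x, ∫⁻ y, ENNReal.ofReal (min (S * x) y) ∂(expMeasure ν) ∂(P.map T) := by
    rw [← lintegral_map hmMin.ennreal_ofReal (hmT.prodMk hmD), hmap,
      lintegral_prod _ (hmMin.ennreal_ofReal.aemeasurable)]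
  -- step 3 : inner integral
  have hT0' : ∀ᵐ x ∂(P.map T), 0 ≤ x := by
    rw [ae_iff]
    have : {x : ℝ | ¬ 0 ≤ x} = Iio 0 := by ext x; simp [not_le]
    rw [this, Measure.map_apply hmT measurableSet_Iio]
    rw [ae_iff] at hT0
    convert hT0 using 2
    ext ω
    simp [not_le]
  have step3 : ∫⁻ x, ∫⁻ y, ENNReal.ofReal (min (S * x) y) ∂(expMeasure ν) ∂(P.map T)
      = ∫⁻ x, ENNReal.ofReal ((1 - Real.exp (-(ν * (S * x)))) / ν) ∂(P.map T) := by
    refine lintegral_congr_ae (hT0'.mono fun x hx => ?_)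
    exact min_exp_lintegral hν (by positivity)
  -- step 4 : back to P
  have step4 : ∫⁻ x, ENNReal.ofReal ((1 - Real.exp (-(ν * (S * x)))) / ν) ∂(P.map T)
      = ∫⁻ ω, ENNReal.ofReal ((1 - Real.exp (-(ν * (S * T ω)))) / ν) ∂P := by
    rw [lintegral_map (by fun_prop) hmT]
  -- step 5 : back to a Bochner integral
  have hφnn : ∀ᵐ ω ∂P, 0 ≤ (1 - Real.exp (-(ν * (S * T ω)))) / ν := by
    filter_upwards [hT0] with ω h1
    have : Real.exp (-(ν * (S * T ω))) ≤ 1 := by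
      rw [← Real.exp_zero]
      exact Real.exp_le_exp.mpr (neg_nonpos.mpr (mul_nonneg hν.le (mul_nonneg hS.le h1)))
    have h2 : 0 ≤ 1 - Real.exp (-(ν * (S * T ω))) := by linarith
    positivity
  have step5 : ∫ ω, (1 - Real.exp (-(ν * (S * T ω)))) / ν ∂P
      = (∫⁻ ω, ENNReal.ofReal ((1 - Real.exp (-(ν * (S * T ω)))) / ν) ∂P).toReal := by
    exact integral_eq_lintegral_of_nonneg_ae hφnn
      ((measurable_const.sub (((hmT.const_mul S).const_mul ν).neg.exp)).div_const
        ν).aestronglyMeasurable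
  -- step 6 : compute the Bochner integral of the exponential
  have hexp_int : Integrable (fun ω => Real.exp (-(c * T ω))) P := by
    refine Integrable.mono' (integrable_const 1)
      ((hmT.const_mul c).neg.exp).aestronglyMeasurable ?_
    filter_upwards [hT0] with ω h1
    rw [Real.norm_eq_abs, abs_of_nonneg (Real.exp_nonneg _), ← Real.exp_zero]
    exact Real.exp_le_exp.mpr (neg_nonpos.mpr (mul_nonneg hc0.le h1))
  have hmgf : ∫ ω, Real.exp (-(c * T ω)) ∂P = ∏ l, μ l / (μ l + c) := by
    have h1 : mgf (∑ i ∈ s', g i) P (-c) = ∏ i ∈ s', mgf (g i) P (-c) :=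
      hindep.mgf_sum hmg s'
    rw [hTsum] at h1
    have h2 : ∏ i ∈ s', mgf (g i) P (-c) = ∏ l, mgf (B l) P (-c) := by
      rw [hs', Finset.prod_image hinj]
      simp [hg, Fin.cons_succ]
    have h3 : ∀ l, mgf (B l) P (-c) = μ l / (μ l + c) := by
      intro l
      have : mgf (B l) P (-c) = ∫ ω, Real.exp (-(c * B l ω)) ∂P := by
        unfold mgf
        congr 1
        ext ω
        ring_nf
      rw [this, exp_comp_integral (hmB l) (hB l) (hμ l) hc0.le]
    have h4 : mgf T P (-c) = ∫ ω, Real.exp (-(c * T ω)) ∂P := by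
      unfold mgf
      congr 1
      ext ω
      ring_nf
    rw [← h4, h1, h2]
    exact Finset.prod_congr rfl fun l _ => h3 l
  have step6 : ∫ ω, (1 - Real.exp (-(ν * (S * T ω)))) / ν ∂P
      = (1 - ∏ l, μ l / (μ l + c)) / ν := by
    have hee : ∀ ω, (1 - Real.exp (-(ν * (S * T ω)))) / ν
        = ν⁻¹ * (1 - Real.exp (-(c * T ω))) := by
      intro ω
      rw [hc]
      field_simp
    simp_rw [hee]
    rw [integral_const_mul, integral_sub (integrable_const 1) hexp_int, integral_const]
    simp only [probReal_univ, measure_univ, ENNReal.toReal_one, smul_eq_mul, one_mul]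
    rw [hmgf]
    field_simp
  -- algebra
  have key : ν * S = lam * (1 - ∏ i, μ i / (μ i + ν * S)) :=
    alg_key μ z hμ hν hS hSdef heq0 heqi
  -- assemble
  have hfinal : ∫ ω, min (S * T ω) (D ω) ∂P = (1 - ∏ l, μ l / (μ l + c)) / ν := by
    rw [step1, step2, step3, step4, ← step5, step6]
  have key2 : lam * ((1 - ∏ l, μ l / (μ l + c)) / ν) = S := by
    rw [hc]
    calc lam * ((1 - ∏ l, μ l / (μ l + ν * S)) / ν)
        = (lam * (1 - ∏ l, μ l / (μ l + ν * S))) / ν := by ring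
      _ = (ν * S) / ν := by rw [← key]
      _ = S := by field_simp
  rw [hfinal, key2]
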